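/- arXiv:1009.3345 — 2 statements merged into one kernel-verified Lean document; each statement's English description precedes it below -/
import Mathlib

section
/- Let H be an L×L complex matrix with singular values σ₁ ≥ σ₂ ≥ … ≥ σ_L and SVD H = V Σ U†. Let G be the L×N matrix formed by the last N columns of V (those corresponding to σ_{L−N+1},…,σ_L), let F be the L×M matrix formed by the first M columns of U, and let F̂ be any L×M matrix with orthonormal columns. Then ‖G† H F̂‖_F² ≤ σ_{L−N+1}² · M ε, where ε := 1 − ‖F† F̂‖_F²/M. -/
open Matrix

/-- Squared Frobenius norm of a complex matrix. -/
noncomputable def frobSq {m n : Type*} [Fintype m] [Fintype n] (X : Matrix m n ℂ) : ℝ :=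
  ∑ i, ∑ j, ‖X i j‖ ^ 2

/-- with `H = V Σ Uᴴ` an SVD of the `L × L` matrix `H` with decreasingly ordered
nonnegative singular values `σ`, `G` the last `N` columns of `V`, `F` the first `M` columns of
`U`, and `F̂` any `L × M` matrix with orthonormal columns, one has
`‖Gᴴ H F̂‖_F² ≤ σ_{L-N+1}² · M ε`, where `ε = 1 - ‖Fᴴ F̂‖_F² / M`. -/
theorem stmt4 {L N M : ℕ} (hN : 0 < N) (hM : 0 < M) (hNM : N + M ≤ L)
    (H V U : Matrix (Fin L) (Fin L) ℂ) (σ : Fin L → ℝ)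
    (hσ0 : ∀ k, 0 ≤ σ k) (hσ : Antitone σ)
    (hV : V ∈ Matrix.unitaryGroup (Fin L) ℂ)
    (hU : U ∈ Matrix.unitaryGroup (Fin L) ℂ)
    (hH : H = V * Matrix.diagonal (fun k => (σ k : ℂ)) * Uᴴ)
    (G : Matrix (Fin L) (Fin N) ℂ)
    (hG : ∀ i (j : Fin N), G i j = V i ⟨L - N + j.1, by omega⟩)
    (F : Matrix (Fin L) (Fin M) ℂ)
    (hF : ∀ i (j : Fin M), F i j = U i ⟨j.1, by omega⟩)
    (Fhat : Matrix (Fin L) (Fin M) ℂ) (hFhat : Fhatᴴ * Fhat = 1)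
    (eps : ℝ) (heps : eps = 1 - frobSq (Fᴴ * Fhat) / M) :
    frobSq (Gᴴ * H * Fhat) ≤ (σ ⟨L - N, by omega⟩) ^ 2 * (M * eps) := by
  have hVu : Vᴴ * V = 1 := by
    have := hV.1; rwa [Matrix.star_eq_conjTranspose] at this
  have hUu : U * Uᴴ = 1 := by
    have := hU.2; rwa [Matrix.star_eq_conjTranspose] at this
  set D : Matrix (Fin L) (Fin L) ℂ := Matrix.diagonal (fun k => (σ k : ℂ)) with hD
  set W : Matrix (Fin L) (Fin M) ℂ := Uᴴ * Fhat with hWdef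
  let e : Fin N → Fin L := fun j => ⟨L - N + j.1, by omega⟩
  let e' : Fin M → Fin L := fun j => ⟨j.1, by omega⟩
  have hGsub : G = V.submatrix id e := by
    ext i j; simp [e, hG, Matrix.submatrix_apply]
  have hFsub : F = U.submatrix id e' := by
    ext i j; simp [e', hF, Matrix.submatrix_apply]
  -- key identity : Gᴴ * H * Fhat = (D * W).submatrix e id
  have keysub : ∀ (A : Matrix (Fin L) (Fin L) ℂ) (B : Matrix (Fin L) (Fin M) ℂ)
      (f : Fin N → Fin L), (Aᴴ.submatrix f id) * B = (Aᴴ * B).submatrix f id := by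
    intro A B f
    have := Matrix.submatrix_mul_equiv Aᴴ B f (Equiv.refl (Fin L)) id
    simpa using this
  have keysub' : ∀ (A : Matrix (Fin L) (Fin L) ℂ) (B : Matrix (Fin L) (Fin M) ℂ)
      (f : Fin M → Fin L), (Aᴴ.submatrix f id) * B = (Aᴴ * B).submatrix f id := by
    intro A B f
    have := Matrix.submatrix_mul_equiv Aᴴ B f (Equiv.refl (Fin L)) id
    simpa using this
  have key : Gᴴ * H * Fhat = (D * W).submatrix e id := by
    rw [hH, hGsub, Matrix.conjTranspose_submatrix]
    have h1 : (Vᴴ.submatrix e id) * (V * D * Uᴴ) * Fhat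
        = (Vᴴ.submatrix e id) * (V * D * Uᴴ * Fhat) := by
      rw [Matrix.mul_assoc]
    rw [h1, keysub]
    refine congrArg (fun X : Matrix (Fin L) (Fin M) ℂ => Matrix.submatrix X e id) ?_
    calc Vᴴ * (V * D * Uᴴ * Fhat) = (Vᴴ * V) * (D * (Uᴴ * Fhat)) := by
          simp only [Matrix.mul_assoc]
      _ = D * W := by rw [hVu, Matrix.one_mul, hWdef]
  have keyF : Fᴴ * Fhat = W.submatrix e' id := by
    rw [hFsub, Matrix.conjTranspose_submatrix, keysub', hWdef]
  -- column normalization of W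
  have hWW : Wᴴ * W = 1 := by
    rw [hWdef, Matrix.conjTranspose_mul, Matrix.conjTranspose_conjTranspose]
    calc Fhatᴴ * U * (Uᴴ * Fhat) = Fhatᴴ * (U * Uᴴ) * Fhat := by
          simp only [Matrix.mul_assoc]
      _ = 1 := by rw [hUu, Matrix.mul_one, hFhat]
  have hcol : ∀ m : Fin M, ∑ k, ‖W k m‖ ^ 2 = 1 := by
    intro m
    have h1 : (Wᴴ * W) m m = 1 := by rw [hWW]; simp
    rw [Matrix.mul_apply] at h1
    have h2 : ∀ k, Wᴴ m k * W k m = ((‖W k m‖ ^ 2 : ℝ) : ℂ) := by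
      intro k
      simp [Matrix.conjTranspose_apply, Complex.star_def,
        ← Complex.normSq_eq_conj_mul_self, Complex.normSq_eq_norm_sq]
    rw [Finset.sum_congr rfl (fun k _ => h2 k)] at h1
    rw [← Complex.ofReal_sum] at h1
    exact_mod_cast h1
  -- row sums
  set f : Fin L → ℝ := fun k => ∑ m, ‖W k m‖ ^ 2 with hfdef
  have hf0 : ∀ k, 0 ≤ f k := fun k => Finset.sum_nonneg fun m _ => by positivity
  have htot : ∑ k, f k = M := by
    calc ∑ k, f k = ∑ m, ∑ k, ‖W k m‖ ^ 2 := Finset.sum_comm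
      _ = ∑ _m : Fin M, (1 : ℝ) := Finset.sum_congr rfl fun m _ => hcol m
      _ = M := by simp
  -- frobSq of Fᴴ Fhat
  have hFF : frobSq (Fᴴ * Fhat) = ∑ j, f (e' j) := by
    rw [keyF]; rfl
  -- frobSq of Gᴴ H Fhat
  have hGH : frobSq (Gᴴ * H * Fhat) = ∑ j, (σ (e j)) ^ 2 * f (e j) := by
    rw [key, frobSq]
    refine Finset.sum_congr rfl fun j _ => ?_
    rw [hfdef, Finset.mul_sum]
    refine Finset.sum_congr rfl fun m _ => ?_
    simp only [Matrix.submatrix_apply, id_eq, hD, Matrix.diagonal_mul]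
    rw [norm_mul, mul_pow, Complex.norm_real, Real.norm_eq_abs, abs_of_nonneg (hσ0 _)]
  -- injectivity and disjointness
  have hinje : Function.Injective e := by
    intro a b h
    have : (e a).1 = (e b).1 := congrArg Fin.val h
    simp only [e] at this
    exact Fin.ext (by omega)
  have hinje' : Function.Injective e' := by
    intro a b h
    have : (e' a).1 = (e' b).1 := congrArg Fin.val h
    simp only [e'] at this
    exact Fin.ext (by omega)
  have hsum_e : ∑ j, f (e j) = ∑ k ∈ Finset.univ.image e, f k := by
    rw [Finset.sum_image (fun a _ b _ h => hinje h)]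
  have hsum_e' : ∑ j, f (e' j) = ∑ k ∈ Finset.univ.image e', f k := by
    rw [Finset.sum_image (fun a _ b _ h => hinje' h)]
  have hdisj : Disjoint (Finset.univ.image e) (Finset.univ.image e') := by
    rw [Finset.disjoint_left]
    intro k hk hk'
    simp only [Finset.mem_image, Finset.mem_univ, true_and] at hk hk'
    obtain ⟨a, ha⟩ := hk
    obtain ⟨b, hb⟩ := hk'
    have h1 : (e a).1 = k.1 := congrArg Fin.val ha
    have h2 : (e' b).1 = k.1 := congrArg Fin.val hb
    simp only [e, e'] at h1 h2
    omega
  have hbound : ∑ j, f (e j) + ∑ j, f (e' j) ≤ M := by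
    rw [hsum_e, hsum_e', ← Finset.sum_union hdisj, ← htot]
    exact Finset.sum_le_sum_of_subset_of_nonneg (Finset.subset_univ _)
      (fun k _ _ => hf0 k)
  -- final estimate
  have hσle : ∀ j : Fin N, (σ (e j)) ^ 2 ≤ (σ ⟨L - N, by omega⟩) ^ 2 := by
    intro j
    have hle : (⟨L - N, by omega⟩ : Fin L) ≤ e j := by
      simp only [Fin.le_def, e]; omega
    exact pow_le_pow_left₀ (hσ0 _) (hσ hle) 2
  have hMeps : M * eps = M - frobSq (Fᴴ * Fhat) := by
    rw [heps]
    field_simp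
  rw [hGH, hMeps, hFF]
  calc ∑ j, (σ (e j)) ^ 2 * f (e j)
      ≤ ∑ j, (σ (⟨L - N, by omega⟩ : Fin L)) ^ 2 * f (e j) :=
        Finset.sum_le_sum fun j _ => mul_le_mul_of_nonneg_right (hσle j) (hf0 _)
    _ = (σ (⟨L - N, by omega⟩ : Fin L)) ^ 2 * ∑ j, f (e j) := by
        rw [Finset.mul_sum]
    _ ≤ (σ (⟨L - N, by omega⟩ : Fin L)) ^ 2 * ((M : ℝ) - ∑ j, f (e' j)) := by
        apply mul_le_mul_of_nonneg_left _ (sq_nonneg _)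
        linarith [hbound]
end

section
/- Let H be an L×L complex matrix with singular values σ₁ ≥ … ≥ σ_L, and let G, F, F̂ be as follows: G consists of N left singular vectors of H indexed by a set A, F consists of M right singular vectors indexed by a set B with A ∩ B = ∅, and F̂ is an L×M matrix with orthonormal columns with quantization error ε = 1 − ‖F†F̂‖_F²/M. Let D_A := {σ_k : k ∈ A}. Then for any unit vector g in the column space of G and any M×M unitary matrix W, ‖g† H F̂ W‖² ≤ M ε · max_{α ∈ D_A} α². -/
open Matrix

lemma castNormSq (z : ℂ) : ((‖z‖ ^ 2 : ℝ) : ℂ) = star z * z := by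
  have h : z * star z = ((Complex.normSq z : ℝ) : ℂ) := Complex.mul_conj z
  rw [mul_comm, h, Complex.normSq_eq_norm_sq]

lemma castSumNormSq {n : Type*} [Fintype n] (y : n → ℂ) :
    ((∑ j, ‖y j‖ ^ 2 : ℝ) : ℂ) = y ⬝ᵥ star y := by
  rw [dotProduct]
  push_cast
  refine Finset.sum_congr rfl fun j _ => ?_
  simp only [Pi.star_apply]
  have h := castNormSq (y j)
  push_cast at h
  rw [h]
  exact mul_comm _ _

lemma sumSq_vecMul_unitary {n : Type*} [Fintype n] [DecidableEq n] (x : n → ℂ)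
    (W : Matrix n n ℂ) (hW : W * Wᴴ = 1) :
    ∑ j, ‖(x ᵥ* W) j‖ ^ 2 = ∑ j, ‖x j‖ ^ 2 := by
  have h := castSumNormSq (x ᵥ* W)
  rw [Matrix.star_vecMul, Matrix.dotProduct_mulVec, Matrix.vecMul_vecMul, hW,
    Matrix.vecMul_one, ← castSumNormSq x] at h
  exact_mod_cast h

/-- Lemma 1 of the paper, with `P = ν = 1`: if `H = V Σ Uᴴ` is an SVD, `G`
consists of the `N` left singular vectors indexed by `A`, `F` of the `M` right singular
vectors indexed by `B` with `A ∩ B = ∅`, `F̂` has orthonormal columns with quantization error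
`ε = 1 - ‖Fᴴ F̂‖_F²/M`, then for every unit vector `g` in the column space of `G` and every
`M × M` unitary `W`, `‖gᴴ H F̂ W‖² ≤ M ε · max_{α ∈ D_A} α²` where `D_A = {σ_k : k ∈ A}`. -/
theorem stmt5 {L N M : ℕ}
    (H V U : Matrix (Fin L) (Fin L) ℂ) (σ : Fin L → ℝ) (hσ0 : ∀ k, 0 ≤ σ k)
    (hV : V ∈ Matrix.unitaryGroup (Fin L) ℂ)
    (hU : U ∈ Matrix.unitaryGroup (Fin L) ℂ)
    (hH : H = V * Matrix.diagonal (fun k => (σ k : ℂ)) * Uᴴ)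
    (A B : Finset (Fin L)) (hAB : Disjoint A B)
    (hAcard : A.card = N) (hBcard : B.card = M) (hA : A.Nonempty)
    (F : Matrix (Fin L) B ℂ) (hF : F = U.submatrix id (fun b : B => (b : Fin L)))
    (Fhat : Matrix (Fin L) (Fin M) ℂ) (hFhat : Fhatᴴ * Fhat = 1)
    (eps : ℝ) (heps : eps = 1 - frobSq (Fᴴ * Fhat) / M)
    (g : Fin L → ℂ)
    (hg : g ∈ Submodule.span ℂ (Set.range fun a : A => (fun i => V i (a : Fin L))))
    (hgnorm : ∑ i, ‖g i‖ ^ 2 = 1)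
    (W : Matrix (Fin M) (Fin M) ℂ) (hW : W ∈ Matrix.unitaryGroup (Fin M) ℂ) :
    ∑ j, ‖(Matrix.vecMul (star g) (H * Fhat * W)) j‖ ^ 2
      ≤ M * eps * A.sup' hA (fun k => (σ k) ^ 2) := by
  -- basic unitarity facts
  have hVV : V * Vᴴ = 1 := by
    rw [← Matrix.star_eq_conjTranspose]; exact Matrix.mem_unitaryGroup_iff.mp hV
  have hVV' : Vᴴ * V = 1 := by
    rw [← Matrix.star_eq_conjTranspose]; exact Matrix.mem_unitaryGroup_iff'.mp hV
  have hUU : U * Uᴴ = 1 := by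
    rw [← Matrix.star_eq_conjTranspose]; exact Matrix.mem_unitaryGroup_iff.mp hU
  have hWW : W * Wᴴ = 1 := by
    rw [← Matrix.star_eq_conjTranspose]; exact Matrix.mem_unitaryGroup_iff.mp hW
  set T : Matrix (Fin L) (Fin M) ℂ := Uᴴ * Fhat with hT_def
  set d : Fin L → ℂ := star g ᵥ* V with hd_def
  set Dm : Matrix (Fin L) (Fin L) ℂ := Matrix.diagonal (fun k => (σ k : ℂ)) with hDm
  -- decompose g
  obtain ⟨c, hc⟩ := (Submodule.mem_span_range_iff_exists_fun ℂ).mp hg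
  have hgi : ∀ i, g i = ∑ a : A, c a * V i ↑a := by
    intro i
    conv_lhs => rw [← hc]
    simp [Finset.sum_apply]
  have hdform : ∀ k, d k = ∑ a : A, star (c a) * ((Vᴴ * V) (↑a : Fin L) k) := by
    intro k
    show ∑ i, (star g) i * V i k = _
    calc ∑ i, (star g) i * V i k
        = ∑ i, ∑ a : A, star (c a) * star (V i ↑a) * V i k := by
          refine Finset.sum_congr rfl fun i _ => ?_
          rw [Pi.star_apply, hgi i, star_sum, Finset.sum_mul]
          exact Finset.sum_congr rfl fun a _ => by rw [star_mul']
      _ = ∑ a : A, ∑ i, star (c a) * star (V i ↑a) * V i k := Finset.sum_comm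
      _ = ∑ a : A, star (c a) * ((Vᴴ * V) (↑a : Fin L) k) := by
          refine Finset.sum_congr rfl fun a _ => ?_
          rw [Matrix.mul_apply, Finset.mul_sum]
          exact Finset.sum_congr rfl fun i _ => by
            rw [Matrix.conjTranspose_apply, mul_assoc]
  have hd0 : ∀ k, k ∉ A → d k = 0 := by
    intro k hk
    rw [hdform k, hVV']
    refine Finset.sum_eq_zero fun a _ => ?_
    rw [Matrix.one_apply_ne (fun h : (↑a : Fin L) = k => hk (h ▸ a.2)), mul_zero]
  have hd2 : ∑ k ∈ A, ‖d k‖ ^ 2 = 1 := by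
    have h1 : ∑ k, ‖d k‖ ^ 2 = 1 := by
      calc ∑ k, ‖d k‖ ^ 2 = ∑ j, ‖(star g) j‖ ^ 2 := sumSq_vecMul_unitary _ V hVV
        _ = ∑ j, ‖g j‖ ^ 2 := by simp
        _ = 1 := hgnorm
    rw [← h1]
    refine Finset.sum_subset (Finset.subset_univ A) ?_
    intro k _ hk
    rw [hd0 k hk]
    simp
  -- properties of T
  have hTT : Tᴴ * T = 1 := by
    rw [hT_def, Matrix.conjTranspose_mul, Matrix.conjTranspose_conjTranspose,
      Matrix.mul_assoc, ← Matrix.mul_assoc U Uᴴ Fhat, hUU, Matrix.one_mul, hFhat]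
  have hTfrob : ∑ k, ∑ j, ‖T k j‖ ^ 2 = (M : ℝ) := by
    have hcast : ((∑ k, ∑ j, ‖T k j‖ ^ 2 : ℝ) : ℂ) = Matrix.trace (Tᴴ * T) := by
      rw [Matrix.trace]
      push_cast
      rw [Finset.sum_comm]
      refine Finset.sum_congr rfl fun j _ => ?_
      rw [Matrix.diag_apply, Matrix.mul_apply]
      refine Finset.sum_congr rfl fun k _ => ?_
      have h := castNormSq (T k j)
      push_cast at h
      rw [h, Matrix.conjTranspose_apply]
    rw [hTT, Matrix.trace_one, Fintype.card_fin] at hcast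
    exact_mod_cast hcast
  have hBfrob : frobSq (Fᴴ * Fhat) = ∑ k ∈ B, ∑ j, ‖T k j‖ ^ 2 := by
    rw [frobSq, ← Finset.sum_coe_sort B (fun k => ∑ j, ‖T k j‖ ^ 2)]
    refine Finset.sum_congr rfl fun b _ => Finset.sum_congr rfl fun j _ => ?_
    have hbj : (Fᴴ * Fhat) b j = T (↑b : Fin L) j := by
      rw [hT_def, Matrix.mul_apply, Matrix.mul_apply]
      refine Finset.sum_congr rfl fun i _ => ?_
      rw [Matrix.conjTranspose_apply, Matrix.conjTranspose_apply, hF,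
        Matrix.submatrix_apply, id]
    rw [hbj]
  have hAle : ∑ k ∈ A, ∑ j, ‖T k j‖ ^ 2 ≤ (M : ℝ) - frobSq (Fᴴ * Fhat) := by
    rw [hBfrob, ← hTfrob]
    have h1 : ∑ k ∈ A ∪ B, ∑ j, ‖T k j‖ ^ 2
        = ∑ k ∈ A, ∑ j, ‖T k j‖ ^ 2 + ∑ k ∈ B, ∑ j, ‖T k j‖ ^ 2 :=
      Finset.sum_union hAB
    have h2 : ∑ k ∈ A ∪ B, ∑ j, ‖T k j‖ ^ 2 ≤ ∑ k, ∑ j, ‖T k j‖ ^ 2 :=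
      Finset.sum_le_sum_of_subset_of_nonneg (Finset.subset_univ _)
        (fun k _ _ => by positivity)
    linarith
  -- reduce the LHS
  have hHF : star g ᵥ* (H * Fhat) = d ᵥ* (Dm * T) := by
    rw [hH, Matrix.mul_assoc (V * Dm) Uᴴ Fhat, ← hT_def, Matrix.mul_assoc V Dm T,
      ← Matrix.vecMul_vecMul, ← hd_def]
  rw [← Matrix.vecMul_vecMul (star g) (H * Fhat) W,
    sumSq_vecMul_unitary _ W hWW, hHF]
  set sup : ℝ := A.sup' hA (fun k => (σ k) ^ 2) with hsup_def
  have hsupk : ∀ k ∈ A, σ k ^ 2 ≤ sup := by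
    intro k hk
    rw [hsup_def]
    exact Finset.le_sup' (fun k => σ k ^ 2) hk
  have hsup0 : 0 ≤ sup :=
    le_trans (sq_nonneg (σ hA.choose)) (hsupk _ hA.choose_spec)
  have key : ∀ j, ‖(d ᵥ* (Dm * T)) j‖ ^ 2 ≤ ∑ k ∈ A, σ k ^ 2 * ‖T k j‖ ^ 2 := by
    intro j
    have e1 : (d ᵥ* (Dm * T)) j = ∑ k ∈ A, d k * ((σ k : ℂ) * T k j) := by
      show ∑ k, d k * (Dm * T) k j = _
      rw [← Finset.sum_subset (Finset.subset_univ A)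
        (fun k _ hk => by rw [hd0 k hk, zero_mul])]
      exact Finset.sum_congr rfl fun k _ => by rw [hDm, Matrix.diagonal_mul]
    rw [e1]
    have e2 : ‖∑ k ∈ A, d k * ((σ k : ℂ) * T k j)‖
        ≤ ∑ k ∈ A, ‖d k‖ * (σ k * ‖T k j‖) := by
      refine (norm_sum_le _ _).trans (le_of_eq (Finset.sum_congr rfl fun k hk => ?_))
      rw [norm_mul, norm_mul, Complex.norm_real, Real.norm_eq_abs,
        abs_of_nonneg (hσ0 k)]
    calc ‖∑ k ∈ A, d k * ((σ k : ℂ) * T k j)‖ ^ 2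
        ≤ (∑ k ∈ A, ‖d k‖ * (σ k * ‖T k j‖)) ^ 2 := by
          apply pow_le_pow_left₀ (norm_nonneg _) e2
      _ ≤ (∑ k ∈ A, ‖d k‖ ^ 2) * (∑ k ∈ A, (σ k * ‖T k j‖) ^ 2) :=
          Finset.sum_mul_sq_le_sq_mul_sq A _ _
      _ = ∑ k ∈ A, σ k ^ 2 * ‖T k j‖ ^ 2 := by
          rw [hd2, one_mul]
          exact Finset.sum_congr rfl fun k _ => by rw [mul_pow]
  rcases Nat.eq_zero_or_pos M with hM | hM
  · subst hM
    simp
  · calc ∑ j, ‖(d ᵥ* (Dm * T)) j‖ ^ 2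
        ≤ ∑ j, ∑ k ∈ A, σ k ^ 2 * ‖T k j‖ ^ 2 := Finset.sum_le_sum fun j _ => key j
      _ = ∑ k ∈ A, σ k ^ 2 * ∑ j, ‖T k j‖ ^ 2 := by
          rw [Finset.sum_comm]
          exact Finset.sum_congr rfl fun k _ => (Finset.mul_sum _ _ _).symm
      _ ≤ ∑ k ∈ A, sup * ∑ j, ‖T k j‖ ^ 2 :=
          Finset.sum_le_sum fun k hk =>
            mul_le_mul_of_nonneg_right (hsupk k hk) (by positivity)
      _ = sup * ∑ k ∈ A, ∑ j, ‖T k j‖ ^ 2 := (Finset.mul_sum _ _ _).symm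
      _ ≤ sup * ((M : ℝ) - frobSq (Fᴴ * Fhat)) :=
          mul_le_mul_of_nonneg_left hAle hsup0
      _ = M * eps * sup := by
          rw [heps]
          have hM' : (M : ℝ) ≠ 0 := Nat.cast_ne_zero.mpr hM.ne'
          field_simp
end
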